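/- The graph of the maximizing-measure correspondence is closed: the set {(f, μ) ∈ C(X,ℝ) × M : μ is f-maximizing} is closed in C(X,ℝ) × M (where C(X,ℝ) carries the supremum-norm topology and M the weak* topology). Equivalently, if f_n → f in C(X,ℝ), μ_n → μ in the weak* topology, and μ_n is f_n-maximizing for each n, then μ is f-maximizing. -/

import Mathlib

open MeasureTheory Topology Filter
open scoped NNReal

variable {X : Type*} [MetricSpace X] [CompactSpace X] [Nonempty X]
  [MeasurableSpace X] [BorelSpace X]

/-- The set of `T`-invariant Borel probability measures on `X`,
equipped (as a subtype) with the weak* topology. -/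
def Minv (T : X → X) : Set (ProbabilityMeasure X) :=
  {μ | (μ : Measure X).map T = (μ : Measure X)}

/-- The integral of a continuous function against a probability measure. -/
noncomputable def intf (f : C(X, ℝ)) (μ : ProbabilityMeasure X) : ℝ :=
  ∫ x, f x ∂(μ : Measure X)

/-- The maximum ergodic average `β(f) = sup {∫ f dμ : μ ∈ M}`. -/
noncomputable def beta (T : X → X) (f : C(X, ℝ)) : ℝ :=
  sSup (intf f '' Minv T)

/-- The set of `f`-maximizing measures. -/
def MMax (T : X → X) (f : C(X, ℝ)) : Set (ProbabilityMeasure X) :=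
  {μ ∈ Minv T | intf f μ = beta T f}

lemma intf_integrable (f : C(X, ℝ)) (μ : ProbabilityMeasure X) :
    Integrable (fun x => f x) (μ : Measure X) :=
  f.continuous.integrable_of_hasCompactSupport (HasCompactSupport.of_compactSpace _)

lemma abs_intf_le (f : C(X, ℝ)) (μ : ProbabilityMeasure X) : |intf f μ| ≤ ‖f‖ := by
  have := norm_integral_le_of_norm_le_const (μ := (μ : Measure X))
    (f := fun x => f x) (C := ‖f‖) (Eventually.of_forall fun x => f.norm_coe_le_norm x)
  simpa [intf, Real.norm_eq_abs] using this

lemma intf_sub (f g : C(X, ℝ)) (μ : ProbabilityMeasure X) :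
    intf f μ - intf g μ = intf (f - g) μ := by
  simp [intf, ← integral_sub (intf_integrable f μ) (intf_integrable g μ)]

lemma intf_lip (f g : C(X, ℝ)) (μ : ProbabilityMeasure X) :
    |intf f μ - intf g μ| ≤ ‖f - g‖ := by
  rw [intf_sub]; exact abs_intf_le _ _

lemma bddAbove_intf (T : X → X) (f : C(X, ℝ)) : BddAbove (intf f '' Minv T) := by
  refine ⟨‖f‖, ?_⟩
  rintro x ⟨μ, -, rfl⟩
  exact le_trans (le_abs_self _) (abs_intf_le f μ)

lemma intf_le_beta (T : X → X) (f : C(X, ℝ)) {μ : ProbabilityMeasure X} (hμ : μ ∈ Minv T) :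
    intf f μ ≤ beta T f :=
  le_csSup (bddAbove_intf T f) ⟨μ, hμ, rfl⟩

lemma beta_lip (T : X → X) (hM : (Minv T).Nonempty) (f g : C(X, ℝ)) :
    beta T f ≤ beta T g + ‖f - g‖ := by
  refine csSup_le (hM.image _) ?_
  rintro x ⟨μ, hμ, rfl⟩
  have h1 : intf f μ ≤ intf g μ + ‖f - g‖ := by
    have := abs_le.1 (intf_lip f g μ)
    linarith [this.2]
  exact h1.trans (by linarith [intf_le_beta T g hμ])

lemma abs_beta_sub (T : X → X) (hM : (Minv T).Nonempty) (f g : C(X, ℝ)) :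
    |beta T f - beta T g| ≤ ‖f - g‖ := by
  rw [abs_le]
  constructor
  · have := beta_lip T hM g f
    rw [show g - f = -(f - g) by ring, norm_neg] at this
    linarith
  · linarith [beta_lip T hM f g]

lemma continuous_intf_fixed (f : C(X, ℝ)) :
    Continuous fun μ : ProbabilityMeasure X => intf f μ := by
  rw [continuous_iff_continuousAt]
  intro μ₀
  have := (ProbabilityMeasure.tendsto_iff_forall_integral_tendsto
    (μs := id) (F := 𝓝 μ₀) (μ := μ₀)).1 tendsto_id
    (BoundedContinuousFunction.mkOfCompact f)
  simpa [intf, ContinuousAt] using this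

lemma continuous_intf :
    Continuous fun p : C(X, ℝ) × ProbabilityMeasure X => intf p.1 p.2 := by
  rw [continuous_iff_continuousAt]
  rintro ⟨f₀, μ₀⟩
  rw [ContinuousAt, Metric.tendsto_nhds]
  intro ε hε
  have h1 : {f : C(X, ℝ) | ‖f - f₀‖ < ε / 2} ∈ 𝓝 f₀ := by
    have : Metric.ball f₀ (ε / 2) ∈ 𝓝 f₀ := Metric.ball_mem_nhds _ (by linarith)
    simpa [Metric.ball, dist_eq_norm] using this
  have h2 : {μ : ProbabilityMeasure X | |intf f₀ μ - intf f₀ μ₀| < ε / 2} ∈ 𝓝 μ₀ := by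
    have := (continuous_intf_fixed (X := X) f₀).continuousAt (x := μ₀)
    rw [ContinuousAt, Metric.tendsto_nhds] at this
    have h := this (ε / 2) (by linarith)
    simp only [Real.dist_eq] at h
    exact h
  filter_upwards [prod_mem_nhds h1 h2] with p hp
  obtain ⟨hpf, hpμ⟩ := hp
  have l1 : |intf p.1 p.2 - intf f₀ p.2| ≤ ‖p.1 - f₀‖ := intf_lip _ _ _
  have : |intf p.1 p.2 - intf f₀ μ₀| < ε := by
    have htri := abs_sub_le (intf p.1 p.2) (intf f₀ p.2) (intf f₀ μ₀)
    have h1' : ‖p.1 - f₀‖ < ε / 2 := hpf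
    have h2' : |intf f₀ p.2 - intf f₀ μ₀| < ε / 2 := hpμ
    linarith
  simpa [Real.dist_eq] using this

/-- The graph of the maximizing-measure correspondence is closed in `C(X,ℝ) × M`. -/
theorem closed_graph_of_MMax (T : X → X) (hT : Continuous T) (hM : (Minv T).Nonempty) :
    IsClosed {p : C(X, ℝ) × (Minv T) | (p.2 : ProbabilityMeasure X) ∈ MMax T p.1} := by
  have hset : {p : C(X, ℝ) × (Minv T) | (p.2 : ProbabilityMeasure X) ∈ MMax T p.1}
      = (fun p : C(X, ℝ) × (Minv T) =>
          intf p.1 (p.2 : ProbabilityMeasure X) - beta T p.1) ⁻¹' {0} := by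
    ext p
    simp only [MMax, Set.mem_setOf_eq, Set.mem_preimage, Set.mem_singleton_iff, sub_eq_zero]
    exact ⟨fun h => h.2, fun h => ⟨p.2.2, h⟩⟩
  rw [hset]
  have hcont : Continuous fun p : C(X, ℝ) × (Minv T) =>
      intf p.1 (p.2 : ProbabilityMeasure X) - beta T p.1 := by
    have hbeta : Continuous (beta T) := by
      rw [Metric.continuous_iff]
      intro f ε hε
      exact ⟨ε, hε, fun g hg => by
        have := abs_beta_sub T hM g f
        rw [Real.dist_eq]
        calc |beta T g - beta T f| ≤ ‖g - f‖ := this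
          _ = dist g f := (dist_eq_norm g f).symm
          _ < ε := hg⟩
    exact (continuous_intf.comp (continuous_fst.prodMk
      (continuous_subtype_val.comp continuous_snd))).sub (hbeta.comp continuous_fst)
  exact IsClosed.preimage hcont isClosed_singleton
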